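/- Let H be a hypergraph with associated simplicial complex ΔH, boundary ∂, and let Φ̄ be the discrete gradient flow of a discrete Morse function on ΔH, with stabilization Φ̄^∞. Then for every n ≥ 0: Φ̄^∞(Inf_n(R(H)_*)) ⊆ Inf_n(Φ̄^∞ R(H)_*) and Φ̄^∞(Sup_n(R(H)_*)) = Sup_n(Φ̄^∞ R(H)_*). Moreover, if Sup_{n−1}(R(H)_*) ⊆ C_{n−1}^{Φ̄}(ΔH;R), then Φ̄^∞(Inf_n(R(H)_*)) = Inf_n(Φ̄^∞ R(H)_*). -/

import Mathlib

/-- A hypergraph: every hyperedge is a nonempty finite set of vertices. -/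
def IsHypergraph {V : Type*} [LinearOrder V] (H : Set (Finset V)) : Prop :=
  ∀ e ∈ H, e.Nonempty

/-- The associated simplicial complex `ΔH`: all nonempty subsets of hyperedges of `H`. -/
def assocSC {V : Type*} [LinearOrder V] (H : Set (Finset V)) : Set (Finset V) :=
  {τ | τ.Nonempty ∧ ∃ σ ∈ H, τ ⊆ σ}

/-- The signed boundary of the basis chain corresponding to a finite set `σ` (with the usual
simplicial signs coming from the linear order on the vertices); vertices map to `0`. -/
noncomputable def bdc {V : Type*} [LinearOrder V] (R : Type*) [CommRing R] (σ : Finset V) :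
    Finset V →₀ R :=
  if σ.card ≤ 1 then 0
  else ∑ v ∈ σ, ((-1 : R) ^ ((σ.filter (fun x => x < v)).card)) •
    Finsupp.single (σ.erase v) (1 : R)

/-- The simplicial boundary operator on the free `R`-module with basis all finite subsets of
`V`. -/
noncomputable def bd {V : Type*} [LinearOrder V] (R : Type*) [CommRing R] :
    (Finset V →₀ R) →ₗ[R] (Finset V →₀ R) :=
  Finsupp.lsum R fun σ => LinearMap.toSpanSingleton R (Finset V →₀ R) (bdc R σ)

/-- `R(H)_n`: the free `R`-module on the `n`-dimensional hyperedges of `H`, as a submodule of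
the chains. -/
noncomputable def RHmod {V : Type*} [LinearOrder V] (R : Type*) [CommRing R] (H : Set (Finset V)) (n : ℕ) :
    Submodule R (Finset V →₀ R) :=
  Submodule.span R {x | ∃ σ ∈ H, σ.card = n + 1 ∧ x = Finsupp.single σ (1 : R)}

/-- The infimum chain complex `Inf_n(R(H)_*) = R(H)_n ⊓ ∂⁻¹(R(H)_{n-1})`. -/
noncomputable def infC {V : Type*} [LinearOrder V] (R : Type*) [CommRing R]
    (H : Set (Finset V)) (n : ℕ) : Submodule R (Finset V →₀ R) :=
  RHmod R H n ⊓ Submodule.comap (bd R) (RHmod R H (n - 1))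

/-- The supremum chain complex `Sup_n(R(H)_*) = R(H)_n + ∂(R(H)_{n+1})`. -/
noncomputable def supC {V : Type*} [LinearOrder V] (R : Type*) [CommRing R]
    (H : Set (Finset V)) (n : ℕ) : Submodule R (Finset V →₀ R) :=
  RHmod R H n ⊔ Submodule.map (bd R) (RHmod R H (n + 1))

/-- The `n`-cycles of the infimum chain complex. -/
noncomputable def cycC {V : Type*} [LinearOrder V] (R : Type*) [CommRing R]
    (H : Set (Finset V)) (n : ℕ) : Submodule R (Finset V →₀ R) :=
  infC R H n ⊓ LinearMap.ker (bd R)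

/-- The `n`-th embedded homology of the hypergraph `H` with coefficients in `R`: the homology
of the infimum chain complex, realized as the image of the `n`-cycles in the quotient of the
chains by the boundaries `∂(Inf_{n+1})`. -/
@[reducible] noncomputable def emH {V : Type*} [LinearOrder V] (R : Type*) [CommRing R]
    (H : Set (Finset V)) (n : ℕ) :=
  ↥(Submodule.map (Submodule.mkQ (Submodule.map (bd R) (infC R H (n + 1)))) (cycC R H n))
/-- A discrete Morse function on a hypergraph `H`. -/
def IsDMF {V : Type*} [LinearOrder V] (H : Set (Finset V)) (f : Finset V → ℝ) : Prop :=
  ∀ α ∈ H,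
    Set.Subsingleton {β : Finset V | β ∈ H ∧ α ⊂ β ∧ β.card = α.card + 1 ∧ f β ≤ f α} ∧
    Set.Subsingleton {γ : Finset V | γ ∈ H ∧ γ ⊂ α ∧ γ.card + 1 = α.card ∧ f α ≤ f γ}

/-- The incidence number `⟨∂β, α⟩` of a codimension-one face `α` of `β` (the simplicial sign
determined by the position of the removed vertex in the ordering of the vertices of `β`). -/
def incid {V : Type*} [LinearOrder V] (b a : Finset V) : ℤ :=
  ∑ v ∈ b \ a, (-1 : ℤ) ^ ((a.filter (fun x => x < v)).card)


/-- `W` realizes, on the chain level, the discrete gradient vector field `grad f` of a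
discrete Morse function `f` on `H`: a hyperedge `α` is sent to `−⟨∂β,α⟩·β` if some cofacet
`β ∈ H` satisfies `f β ≤ f α`, and to `0` otherwise; basis elements outside `H` are sent
to `0`. -/
def RealizesGrad {V : Type*} [LinearOrder V] (R : Type*) [CommRing R] (H : Set (Finset V))
    (f : Finset V → ℝ) (W : (Finset V →₀ R) →ₗ[R] (Finset V →₀ R)) : Prop :=
  (∀ α ∈ H, ∀ β ∈ H, α ⊂ β → β.card = α.card + 1 → f β ≤ f α →
    W (Finsupp.single α (1 : R)) = (-(incid β α)) • Finsupp.single β (1 : R)) ∧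
  (∀ α ∈ H, (¬ ∃ β ∈ H, α ⊂ β ∧ β.card = α.card + 1 ∧ f β ≤ f α) →
    W (Finsupp.single α (1 : R)) = 0) ∧
  (∀ s : Finset V, s ∉ H → W (Finsupp.single s (1 : R)) = 0)

/-- The canonical projection `π(H,H') : R(H)_* → R(H')_*`, sending a hyperedge of `H'` to
itself and every other basis element to zero. -/
noncomputable def projS {V : Type*} [LinearOrder V] (R : Type*) [CommRing R]
    (S : Set (Finset V)) : (Finset V →₀ R) →ₗ[R] (Finset V →₀ R) :=
  open Classical in
  Finsupp.lsum R fun s =>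
    if s ∈ S then LinearMap.toSpanSingleton R (Finset V →₀ R) (Finsupp.single s (1 : R))
    else 0

/-- Let `Φ̄ = Id + ∂V̄ + V̄∂` be the discrete gradient flow of a discrete Morse function
`f̄` on `ΔH`, stabilizing as `Φ̄^∞ = Φ̄^N`.  Then for every `n`:
`Φ̄^∞(Inf_n(R(H)_*)) ⊆ Inf_n(Φ̄^∞ R(H)_*)` and
`Φ̄^∞(Sup_n(R(H)_*)) = Sup_n(Φ̄^∞ R(H)_*)`; moreover, if
`Sup_{n−1}(R(H)_*) ⊆ C_{n−1}^{Φ̄}(ΔH;R)` (the `Φ̄`-invariant chains), then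
`Φ̄^∞(Inf_n(R(H)_*)) = Inf_n(Φ̄^∞ R(H)_*)`. -/
theorem gradient_flow_inf_sup {V : Type*} [LinearOrder V] (R : Type*) [CommRing R]
    (H : Set (Finset V)) (hH : IsHypergraph H) (f : Finset V → ℝ)
    (hf : IsDMF (assocSC H) f)
    (W : (Finset V →₀ R) →ₗ[R] (Finset V →₀ R)) (hW : RealizesGrad R (assocSC H) f W)
    (Phi : (Finset V →₀ R) →ₗ[R] (Finset V →₀ R))
    (hPhi : Phi = LinearMap.id + bd R ∘ₗ W + W ∘ₗ bd R)
    (hcomm : Phi ∘ₗ bd R = bd R ∘ₗ Phi)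
    (N : ℕ) (hstab : Phi ^ (N + 1) = Phi ^ N) :
    ∀ n : ℕ,
      (Submodule.map (Phi ^ N) (infC R H n) ≤
        Submodule.map (Phi ^ N) (RHmod R H n) ⊓
          Submodule.comap (bd R) (Submodule.map (Phi ^ N) (RHmod R H (n - 1)))) ∧
      (Submodule.map (Phi ^ N) (supC R H n) =
        Submodule.map (Phi ^ N) (RHmod R H n) ⊔
          Submodule.map (bd R) (Submodule.map (Phi ^ N) (RHmod R H (n + 1)))) ∧
      (supC R H (n - 1) ≤ LinearMap.ker (Phi - LinearMap.id) →
        Submodule.map (Phi ^ N) (infC R H n) =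
          Submodule.map (Phi ^ N) (RHmod R H n) ⊓
            Submodule.comap (bd R) (Submodule.map (Phi ^ N) (RHmod R H (n - 1)))) := by
  -- commutation of powers of Phi with bd
  have hcommN : ∀ k : ℕ, (Phi ^ k) ∘ₗ bd R = bd R ∘ₗ (Phi ^ k) := by
    intro k
    induction k with
    | zero => ext x; simp
    | succ k ih =>
      rw [pow_succ]
      calc (Phi ^ k * Phi) ∘ₗ bd R = (Phi ^ k) ∘ₗ (Phi ∘ₗ bd R) := by
            ext x; simp [Module.End.mul_apply]
        _ = (Phi ^ k) ∘ₗ (bd R ∘ₗ Phi) := by rw [hcomm]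
        _ = ((Phi ^ k) ∘ₗ bd R) ∘ₗ Phi := by ext x; simp
        _ = (bd R ∘ₗ (Phi ^ k)) ∘ₗ Phi := by rw [ih]
        _ = bd R ∘ₗ (Phi ^ k * Phi) := by ext x; simp [Module.End.mul_apply]
  have hcommN' : ∀ (k : ℕ) (x : Finset V →₀ R),
      (Phi ^ k) (bd R x) = bd R ((Phi ^ k) x) := by
    intro k x
    have := congrArg (fun g => g x) (hcommN k)
    simpa using this
  -- fixed points stay fixed under powers
  have hfix : ∀ (x : Finset V →₀ R), x ∈ LinearMap.ker (Phi - LinearMap.id) →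
      ∀ k : ℕ, (Phi ^ k) x = x := by
    intro x hx k
    have hx1 : Phi x = x := by
      have : Phi x - x = 0 := by simpa [LinearMap.sub_apply] using hx
      exact sub_eq_zero.mp this
    induction k with
    | zero => simp
    | succ k ih => rw [pow_succ]; simp [Module.End.mul_apply, hx1, ih]
  -- bd vanishes on RHmod 0
  have hbd0 : RHmod R H 0 ≤ LinearMap.ker (bd R) := by
    rw [RHmod, Submodule.span_le]
    rintro x ⟨σ, -, hcard, rfl⟩
    have : bd R (Finsupp.single σ (1 : R)) = bdc R σ := by
      simp [bd, Finsupp.lsum_single, LinearMap.toSpanSingleton_apply]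
    simp only [SetLike.mem_coe, LinearMap.mem_ker, this, bdc]
    rw [if_pos (by omega)]
  intro n
  -- Part 1
  have part1 : Submodule.map (Phi ^ N) (infC R H n) ≤
      Submodule.map (Phi ^ N) (RHmod R H n) ⊓
        Submodule.comap (bd R) (Submodule.map (Phi ^ N) (RHmod R H (n - 1))) := by
    rintro _ ⟨x, ⟨hx1, hx2⟩, rfl⟩
    refine ⟨⟨x, hx1, rfl⟩, ?_⟩
    exact Submodule.mem_comap.mpr (Submodule.mem_map.mpr ⟨bd R x, hx2, hcommN' N x⟩)
  refine ⟨part1, ?_, ?_⟩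
  -- Part 2
  · rw [supC, Submodule.map_sup]
    congr 1
    rw [← Submodule.map_comp, ← Submodule.map_comp, hcommN N]
  -- Part 3
  · intro hsup
    refine le_antisymm part1 ?_
    rintro z ⟨⟨x, hx, rfl⟩, hz⟩
    obtain ⟨w, hw, hwz⟩ := Submodule.mem_map.mp (Submodule.mem_comap.mp hz)
    have hbdx : bd R x ∈ RHmod R H (n - 1) := by
      cases n with
      | zero =>
        have : bd R x = 0 := hbd0 hx
        rw [this]; exact Submodule.zero_mem _
      | succ m =>
        -- bd x ∈ sup_{m} = sup_{n-1}
        have hmem : bd R x ∈ supC R H m := by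
          apply Submodule.mem_sup_right
          exact ⟨x, hx, rfl⟩
        have hmem' : bd R x ∈ supC R H (Nat.succ m - 1) := by simpa using hmem
        have hfixbd : (Phi ^ N) (bd R x) = bd R x := hfix _ (hsup hmem') N
        have hwfix : (Phi ^ N) w = w := by
          have : w ∈ supC R H (Nat.succ m - 1) := by
            simp only [Nat.succ_sub_one]
            exact Submodule.mem_sup_left hw
          exact hfix _ (hsup this) N
        have : bd R x = w := by
          rw [← hwfix, hwz, ← hcommN' N x, hfixbd]
        rw [this]
        simpa using hw
    exact ⟨x, ⟨hx, hbdx⟩, rfl⟩
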